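/- Let p_S = Σ_k λ_k p_k be a convex combination of probability measures on ℝ^D with λ_k > 0, and ρ_t^k(x) = ∫ φ_t^D(x−y) dp_k(y). If p_i(B(x,R)) = 0 and p_j(B(x,r)) = C > 0 for some R > r > 0 and i ≠ j, then λ_i ρ_t^i(x)/ρ_t(x) ≤ λ_i / (λ_i + Cλ_j e^{(R²−r²)/(2t)}), where ρ_t = Σ_k λ_k ρ_t^k. Consequently, lim_{t→0⁺} λ_i ρ_t^i(x)/ρ_t(x) = 0. -/

import Mathlib

open MeasureTheory Real Filter Set Topology

/-- Density of the centered Gaussian on `ℝ^n` with covariance `t • I`. -/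
noncomputable def gauss (n : ℕ) (t : ℝ) (x : EuclideanSpace ℝ (Fin n)) : ℝ :=
  (2 * π * t) ^ (-(n : ℝ) / 2) * Real.exp (-‖x‖ ^ 2 / (2 * t))

/-- One-dimensional centered Gaussian density with variance `t`. -/
noncomputable def gauss1 (t u : ℝ) : ℝ :=
  (2 * π * t) ^ (-(1 : ℝ) / 2) * Real.exp (-u ^ 2 / (2 * t))

/-- Euclidean Laplacian: sum of second derivatives along coordinate directions. -/
noncomputable def laplacian {n : ℕ} (f : EuclideanSpace ℝ (Fin n) → ℝ)
    (x : EuclideanSpace ℝ (Fin n)) : ℝ :=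
  ∑ i : Fin n, iteratedDeriv 2 (fun s : ℝ => f (x + s • EuclideanSpace.single i 1)) 0

/-- Convolution of two functions on `ℝ^n`. -/
noncomputable def conv' {n : ℕ} (f g : EuclideanSpace ℝ (Fin n) → ℝ)
    (x : EuclideanSpace ℝ (Fin n)) : ℝ :=
  ∫ y, f y * g (x - y)

/-- Convolution of two functions on `ℝ`. -/
noncomputable def conv1 (f g : ℝ → ℝ) (x : ℝ) : ℝ :=
  ∫ y, f y * g (x - y)

lemma gauss_pos {n : ℕ} {t : ℝ} (ht : 0 < t) (u : EuclideanSpace ℝ (Fin n)) :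
    0 < gauss n t u := by
  have h : 0 < 2 * π * t := by positivity
  unfold gauss
  positivity

lemma gauss_le {n : ℕ} {t : ℝ} (ht : 0 < t) (u : EuclideanSpace ℝ (Fin n)) :
    gauss n t u ≤ (2 * π * t) ^ (-(n : ℝ) / 2) := by
  have h : 0 < 2 * π * t := by positivity
  unfold gauss
  have h1 : Real.exp (-‖u‖ ^ 2 / (2 * t)) ≤ 1 := by
    rw [Real.exp_le_one_iff]
    apply div_nonpos_of_nonpos_of_nonneg
    · simp [sq_nonneg]
    · linarith
  calc (2 * π * t) ^ (-(n : ℝ) / 2) * Real.exp (-‖u‖ ^ 2 / (2 * t))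
      ≤ (2 * π * t) ^ (-(n : ℝ) / 2) * 1 := by
        apply mul_le_mul_of_nonneg_left h1 (Real.rpow_nonneg h.le _)
    _ = (2 * π * t) ^ (-(n : ℝ) / 2) := mul_one _

lemma gauss_cont {n : ℕ} (t : ℝ) (x : EuclideanSpace ℝ (Fin n)) :
    Continuous (fun y : EuclideanSpace ℝ (Fin n) => gauss n t (x - y)) := by
  unfold gauss
  fun_prop

theorem far_component_weight (Dn n : ℕ) (hD : 0 < Dn)
    (p : Fin n → Measure (EuclideanSpace ℝ (Fin Dn)))
    (hp : ∀ k, IsProbabilityMeasure (p k)) (lam : Fin n → ℝ) (hlam : ∀ k, 0 < lam k)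
    (hsum : ∑ k, lam k = 1) (x : EuclideanSpace ℝ (Fin Dn)) (i j : Fin n) (hij : i ≠ j)
    (R r : ℝ) (hr : 0 < r) (hRr : r < R) (C : ℝ) (hC : 0 < C)
    (hi : p i (Metric.ball x R) = 0) (hj : p j (Metric.ball x r) = ENNReal.ofReal C) :
    (∀ t > (0 : ℝ),
      lam i * (∫ y, gauss Dn t (x - y) ∂(p i))
          / (∑ k, lam k * ∫ y, gauss Dn t (x - y) ∂(p k))
        ≤ lam i / (lam i + C * lam j * Real.exp ((R ^ 2 - r ^ 2) / (2 * t)))) ∧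
    Filter.Tendsto
      (fun t => lam i * (∫ y, gauss Dn t (x - y) ∂(p i))
          / (∑ k, lam k * ∫ y, gauss Dn t (x - y) ∂(p k)))
      (nhdsWithin 0 (Set.Ioi 0)) (nhds 0) := by
  have hInt : ∀ t : ℝ, 0 < t → ∀ k, Integrable (fun y => gauss Dn t (x - y)) (p k) := by
    intro t ht k
    haveI := hp k
    refine (integrable_const ((2 * π * t) ^ (-(Dn : ℝ) / 2))).mono'
      (gauss_cont t x).aestronglyMeasurable ?_
    filter_upwards with y
    rw [Real.norm_eq_abs, abs_of_nonneg (gauss_pos ht _).le]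
    exact gauss_le ht _
  have hρnonneg : ∀ t : ℝ, 0 < t → ∀ k, 0 ≤ ∫ y, gauss Dn t (x - y) ∂(p k) :=
    fun t ht k => integral_nonneg fun y => (gauss_pos ht _).le
  -- upper bound for component i
  have hiub : ∀ t : ℝ, 0 < t →
      (∫ y, gauss Dn t (x - y) ∂(p i)) ≤
        (2 * π * t) ^ (-(Dn : ℝ) / 2) * Real.exp (-R ^ 2 / (2 * t)) := by
    intro t ht
    haveI := hp i
    have h2π : 0 < 2 * π * t := by positivity
    have hae : ∀ᵐ y ∂(p i),
        gauss Dn t (x - y) ≤ (2 * π * t) ^ (-(Dn : ℝ) / 2) * Real.exp (-R ^ 2 / (2 * t)) := by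
      have h0 : ∀ᵐ y ∂(p i), y ∉ Metric.ball x R := by
        rw [ae_iff]
        simp only [not_not, Set.setOf_mem_eq]
        exact hi
      filter_upwards [h0] with y hy
      have hdist : R ≤ ‖x - y‖ := by
        rw [Metric.mem_ball, not_lt, dist_comm, dist_eq_norm] at hy
        exact hy
      have hsq : R ^ 2 ≤ ‖x - y‖ ^ 2 :=
        pow_le_pow_left₀ (le_of_lt (hr.trans hRr)) hdist 2
      unfold gauss
      apply mul_le_mul_of_nonneg_left _ (Real.rpow_nonneg h2π.le _)
      apply Real.exp_le_exp.mpr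
      apply (div_le_div_iff_of_pos_right (by linarith : (0:ℝ) < 2 * t)).mpr
      linarith [hsq]
    calc (∫ y, gauss Dn t (x - y) ∂(p i))
        ≤ ∫ _, (2 * π * t) ^ (-(Dn : ℝ) / 2) * Real.exp (-R ^ 2 / (2 * t)) ∂(p i) :=
          integral_mono_ae (hInt t ht i) (integrable_const _) hae
      _ = (2 * π * t) ^ (-(Dn : ℝ) / 2) * Real.exp (-R ^ 2 / (2 * t)) := by simp
  -- lower bound for component j
  have hjlb : ∀ t : ℝ, 0 < t →
      C * ((2 * π * t) ^ (-(Dn : ℝ) / 2) * Real.exp (-r ^ 2 / (2 * t))) ≤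
        ∫ y, gauss Dn t (x - y) ∂(p j) := by
    intro t ht
    haveI := hp j
    have h2π : 0 < 2 * π * t := by positivity
    have h1 : ((2 * π * t) ^ (-(Dn : ℝ) / 2) * Real.exp (-r ^ 2 / (2 * t))) *
        ((p j) (Metric.ball x r)).toReal ≤
        ∫ y in Metric.ball x r, gauss Dn t (x - y) ∂(p j) := by
      apply setIntegral_ge_of_const_le_real measurableSet_ball (measure_ne_top _ _)
      · intro y hy
        rw [Metric.mem_ball, dist_comm, dist_eq_norm] at hy
        have hsq : ‖x - y‖ ^ 2 ≤ r ^ 2 :=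
          pow_le_pow_left₀ (norm_nonneg _) hy.le 2
        unfold gauss
        apply mul_le_mul_of_nonneg_left _ (Real.rpow_nonneg h2π.le _)
        apply Real.exp_le_exp.mpr
        apply (div_le_div_iff_of_pos_right (by linarith : (0:ℝ) < 2 * t)).mpr
        linarith
      · exact (hInt t ht j).integrableOn
    have h2 : ((p j) (Metric.ball x r)).toReal = C := by
      rw [hj, ENNReal.toReal_ofReal hC.le]
    calc C * ((2 * π * t) ^ (-(Dn : ℝ) / 2) * Real.exp (-r ^ 2 / (2 * t)))
        = ((2 * π * t) ^ (-(Dn : ℝ) / 2) * Real.exp (-r ^ 2 / (2 * t))) *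
            ((p j) (Metric.ball x r)).toReal := by rw [h2]; ring
      _ ≤ ∫ y in Metric.ball x r, gauss Dn t (x - y) ∂(p j) := h1
      _ ≤ ∫ y, gauss Dn t (x - y) ∂(p j) :=
          setIntegral_le_integral (hInt t ht j) (ae_of_all _ fun y => (gauss_pos ht _).le)
  -- key comparison
  have hkey : ∀ t : ℝ, 0 < t →
      C * Real.exp ((R ^ 2 - r ^ 2) / (2 * t)) * (∫ y, gauss Dn t (x - y) ∂(p i)) ≤
        ∫ y, gauss Dn t (x - y) ∂(p j) := by
    intro t ht
    have h1 := hiub t ht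
    have h2 := hjlb t ht
    have hEe : Real.exp ((R ^ 2 - r ^ 2) / (2 * t)) * Real.exp (-R ^ 2 / (2 * t)) =
        Real.exp (-r ^ 2 / (2 * t)) := by
      rw [← Real.exp_add]
      congr 1
      field_simp
      ring
    calc C * Real.exp ((R ^ 2 - r ^ 2) / (2 * t)) * (∫ y, gauss Dn t (x - y) ∂(p i))
        ≤ C * Real.exp ((R ^ 2 - r ^ 2) / (2 * t)) *
            ((2 * π * t) ^ (-(Dn : ℝ) / 2) * Real.exp (-R ^ 2 / (2 * t))) :=
          mul_le_mul_of_nonneg_left h1 (by positivity)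
      _ = C * ((2 * π * t) ^ (-(Dn : ℝ) / 2) * Real.exp (-r ^ 2 / (2 * t))) := by
          rw [← hEe]; ring
      _ ≤ ∫ y, gauss Dn t (x - y) ∂(p j) := h2
  -- denominator bounds
  have hS : ∀ t : ℝ, 0 < t →
      lam i * (∫ y, gauss Dn t (x - y) ∂(p i)) + lam j * (∫ y, gauss Dn t (x - y) ∂(p j)) ≤
        ∑ k, lam k * ∫ y, gauss Dn t (x - y) ∂(p k) := by
    intro t ht
    have h := Finset.sum_le_sum_of_subset_of_nonneg
      (s := {i, j}) (t := Finset.univ)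
      (f := fun k => lam k * ∫ y, gauss Dn t (x - y) ∂(p k))
      (Finset.subset_univ _)
      (fun k _ _ => mul_nonneg (hlam k).le (hρnonneg t ht k))
    rwa [Finset.sum_pair hij] at h
  have hjpos : ∀ t : ℝ, 0 < t → 0 < ∫ y, gauss Dn t (x - y) ∂(p j) := by
    intro t ht
    refine lt_of_lt_of_le ?_ (hjlb t ht)
    have h2π : 0 < 2 * π * t := by positivity
    positivity
  have hSpos : ∀ t : ℝ, 0 < t → 0 < ∑ k, lam k * ∫ y, gauss Dn t (x - y) ∂(p k) := by
    intro t ht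
    refine lt_of_lt_of_le ?_ (hS t ht)
    have := mul_nonneg (hlam i).le (hρnonneg t ht i)
    have := mul_pos (hlam j) (hjpos t ht)
    linarith
  -- main inequality
  have main : ∀ t > (0 : ℝ),
      lam i * (∫ y, gauss Dn t (x - y) ∂(p i))
          / (∑ k, lam k * ∫ y, gauss Dn t (x - y) ∂(p k))
        ≤ lam i / (lam i + C * lam j * Real.exp ((R ^ 2 - r ^ 2) / (2 * t))) := by
    intro t ht
    have hE : 0 < Real.exp ((R ^ 2 - r ^ 2) / (2 * t)) := Real.exp_pos _
    have hden2 : 0 < lam i + C * lam j * Real.exp ((R ^ 2 - r ^ 2) / (2 * t)) := by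
      have := hlam i; have := hlam j; positivity
    rw [div_le_div_iff₀ (hSpos t ht) hden2]
    have h1 := hkey t ht
    have h2 := hS t ht
    have a1 : lam i * lam j * (C * Real.exp ((R ^ 2 - r ^ 2) / (2 * t)) *
        (∫ y, gauss Dn t (x - y) ∂(p i))) ≤
        lam i * lam j * (∫ y, gauss Dn t (x - y) ∂(p j)) :=
      mul_le_mul_of_nonneg_left h1 (mul_nonneg (hlam i).le (hlam j).le)
    have a2 : lam i * (lam i * (∫ y, gauss Dn t (x - y) ∂(p i)) +
        lam j * (∫ y, gauss Dn t (x - y) ∂(p j))) ≤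
        lam i * ∑ k, lam k * ∫ y, gauss Dn t (x - y) ∂(p k) :=
      mul_le_mul_of_nonneg_left h2 (hlam i).le
    nlinarith [a1, a2]
  refine ⟨main, ?_⟩
  -- the limit
  have hlim : Tendsto
      (fun t => lam i / (lam i + C * lam j * Real.exp ((R ^ 2 - r ^ 2) / (2 * t))))
      (nhdsWithin 0 (Set.Ioi 0)) (nhds 0) := by
    apply Tendsto.div_atTop tendsto_const_nhds
    apply tendsto_atTop_add_const_left
    apply Tendsto.const_mul_atTop (mul_pos hC (hlam j))
    apply Real.tendsto_exp_atTop.comp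
    have hRrsq : 0 < (R ^ 2 - r ^ 2) / 2 := by nlinarith
    have h := Tendsto.const_mul_atTop hRrsq tendsto_inv_nhdsGT_zero
    refine h.congr fun t => ?_
    ring
  apply tendsto_of_tendsto_of_tendsto_of_le_of_le' tendsto_const_nhds hlim
  · filter_upwards [self_mem_nhdsWithin] with t ht
    exact div_nonneg (mul_nonneg (hlam i).le (hρnonneg t ht i)) (hSpos t ht).le
  · filter_upwards [self_mem_nhdsWithin] with t ht
    exact main t ht
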